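/- Let k, m be positive integers and let 2 ≤ p < ∞. Let S ∈ ℂ^{k×m} be a matrix, r = (r_1, …, r_m) ∈ ℂ^m a vector, and let T ∈ ℂ^{(k+1)×m} be the matrix whose first row is r and whose remaining k rows form S. Then Σ_{I ∈ {1,…,m}^{k+1}} |det(T_I)|^p ≤ (k+1)^{p−1} · (Σ_{l=1}^m |r_l|^p) · (Σ_{J ∈ {1,…,m}^k} |det(S_J)|^p), where the sums range over all ordered tuples of indices (with repetitions allowed). -/

import Mathlib

open Finset Complex

noncomputable def Complex.abs : AbsoluteValue ℂ ℝ where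
  toFun z := ‖z‖
  map_mul' := norm_mul
  nonneg' := norm_nonneg
  eq_zero' _ := norm_eq_zero
  add_le' := norm_add_le

@[simp] lemma Complex.abs_conj (z : ℂ) : Complex.abs ((starRingEnd ℂ) z) = Complex.abs z := by
  show ‖(starRingEnd ℂ) z‖ = ‖z‖
  simp

@[simp] lemma Complex.abs_ofReal (x : ℝ) : Complex.abs (x : ℂ) = |x| := by
  show ‖(x : ℂ)‖ = |x|
  simp

lemma Complex.abs_exp (z : ℂ) : Complex.abs (Complex.exp z) = Real.exp z.re :=
  Complex.norm_exp z

lemma Complex.norm_eq_abs (z : ℂ) : ‖z‖ = Complex.abs z := rfl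

lemma Complex.sq_abs (z : ℂ) : Complex.abs z ^ 2 = Complex.normSq z :=
  (Complex.normSq_eq_norm_sq z).symm

lemma Complex.normSq_eq_abs (z : ℂ) : Complex.normSq z = Complex.abs z ^ 2 :=
  Complex.normSq_eq_norm_sq z

-- chunk
namespace DIL
variable {n m : ℕ}

lemma val_succAbove {N : ℕ} (p : Fin (N+1)) (t : Fin N) :
    (p.succAbove t : ℕ) = if (t:ℕ) < (p:ℕ) then (t:ℕ) else (t:ℕ)+1 := by
  rcases Nat.lt_or_ge (t:ℕ) (p:ℕ) with h | h
  · rw [Fin.succAbove_of_castSucc_lt _ _ (by rwa [Fin.lt_def, Fin.coe_castSucc]), if_pos h,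
      Fin.coe_castSucc]
  · rw [Fin.succAbove_of_le_castSucc _ _ (by rwa [Fin.le_def, Fin.coe_castSucc]),
      if_neg (Nat.not_lt.2 h), Fin.val_succ]

lemma key_succAbove {i j : Fin (n+2)} {j₀ i₀ : Fin (n+1)}
    (hj₀ : i.succAbove j₀ = j) (hi₀ : j.succAbove i₀ = i) (s : Fin n) :
    j.succAbove (i₀.succAbove s) = i.succAbove (j₀.succAbove s) := by
  have hij : i ≠ j := fun h => (Fin.succAbove_ne i j₀) (hj₀.trans h.symm)
  have h1 := congrArg Fin.val hj₀
  have h2 := congrArg Fin.val hi₀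
  have h3 := fun h => hij (Fin.ext h)
  apply Fin.ext
  simp only [val_succAbove] at h1 h2 ⊢
  split_ifs at h1 h2 ⊢ <;> omega

lemma parity_odd {i j : Fin (n+2)} {j₀ i₀ : Fin (n+1)}
    (hj₀ : i.succAbove j₀ = j) (hi₀ : j.succAbove i₀ = i) :
    ((i:ℕ) + (j:ℕ) + (i₀:ℕ) + (j₀:ℕ)) % 2 = 1 := by
  have hij : i ≠ j := fun h => (Fin.succAbove_ne i j₀) (hj₀.trans h.symm)
  have h1 := congrArg Fin.val hj₀
  have h2 := congrArg Fin.val hi₀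
  have h3 := fun h => hij (Fin.ext h)
  simp only [val_succAbove] at h1 h2
  split_ifs at h1 h2 <;> omega

lemma sum_insertNth {M : Type*} [AddCommMonoid M] {N : ℕ} (p : Fin (N+1))
    (φ : (Fin (N+1) → Fin m) → M) :
    ∑ I : Fin (N+1) → Fin m, φ I
      = ∑ x : Fin m, ∑ J : Fin N → Fin m, φ (p.insertNth x J) := by
  rw [← (Fin.insertNthEquiv (fun _ => Fin m) p).sum_comp, Fintype.sum_prod_type]
  rfl

lemma insertNth_eq_cons_comp_cycleRange {α : Type*} {N : ℕ} (t : Fin (N+1)) (a : α)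
    (K : Fin N → α) :
    t.insertNth a K = (Fin.cons a K) ∘ t.cycleRange := by
  funext s
  obtain ⟨u, rfl⟩ : ∃ u, t.cycleRange.symm u = s := ⟨t.cycleRange s, Equiv.symm_apply_apply _ _⟩
  induction u using Fin.cases with
  | zero => simp
  | succ v => simp

def Antisym {k : ℕ} (g : (Fin k → Fin m) → ℂ) : Prop :=
  ∀ (σ : Equiv.Perm (Fin k)) (J : Fin k → Fin m),
    g (J ∘ σ) = ((Equiv.Perm.sign σ : ℤ) : ℂ) * g J

lemma Antisym.insertNth {g : (Fin (n+1) → Fin m) → ℂ} (hg : Antisym g) (t : Fin (n+1))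
    (a : Fin m) (K : Fin n → Fin m) :
    g (t.insertNth a K) = (-1:ℂ)^(t:ℕ) * g (Fin.cons a K) := by
  rw [insertNth_eq_cons_comp_cycleRange, hg t.cycleRange]
  norm_num [Fin.sign_cycleRange]

-- new stuff

lemma insertNth_comp_succAbove_ne {i j : Fin (n+2)} {j₀ i₀ : Fin (n+1)}
    (hj₀ : i.succAbove j₀ = j) (hi₀ : j.succAbove i₀ = i)
    (x : Fin m) (J : Fin (n+1) → Fin m) :
    (i.insertNth x J) ∘ j.succAbove = i₀.insertNth x (J ∘ j₀.succAbove) := by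
  funext t
  refine Fin.succAboveCases i₀ ?_ (fun s => ?_) t
  · simp only [Function.comp_apply, hi₀, Fin.insertNth_apply_same]
  · simp only [Function.comp_apply, key_succAbove hj₀ hi₀, Fin.insertNth_apply_succAbove]

noncomputable def F (r : Fin m → ℂ) (g : (Fin (n+1) → Fin m) → ℂ)
    (I : Fin (n+2) → Fin m) : ℂ :=
  ∑ i : Fin (n+2), (-1:ℂ)^(i:ℕ) * r (I i) * g (I ∘ i.succAbove)

lemma cross_re_nonpos (r : Fin m → ℂ) {g : (Fin (n+1) → Fin m) → ℂ} (hg : Antisym g)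
    {i j : Fin (n+2)} (hij : i ≠ j) :
    (∑ I : Fin (n+2) → Fin m,
      ((-1:ℂ)^(i:ℕ) * r (I i) * g (I ∘ i.succAbove)) *
        (starRingEnd ℂ) ((-1:ℂ)^(j:ℕ) * r (I j) * g (I ∘ j.succAbove))).re ≤ 0 := by
  obtain ⟨j₀, hj₀⟩ := Fin.exists_succAbove_eq hij.symm
  obtain ⟨i₀, hi₀⟩ := Fin.exists_succAbove_eq hij
  set z : (Fin n → Fin m) → ℂ :=
    fun K => ∑ x : Fin m, r x * (starRingEnd ℂ) (g (Fin.cons x K)) with hzdef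
  have main : (∑ I : Fin (n+2) → Fin m,
      ((-1:ℂ)^(i:ℕ) * r (I i) * g (I ∘ i.succAbove)) *
        (starRingEnd ℂ) ((-1:ℂ)^(j:ℕ) * r (I j) * g (I ∘ j.succAbove)))
      = -∑ K : Fin n → Fin m, z K * (starRingEnd ℂ) (z K) := by
    rw [sum_insertNth i]
    have step : ∀ (x : Fin m) (J : Fin (n+1) → Fin m),
        ((-1:ℂ)^(i:ℕ) * r ((i.insertNth x J : Fin (n+2) → Fin m) i) *
            g ((i.insertNth x J : Fin (n+2) → Fin m) ∘ i.succAbove)) *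
          (starRingEnd ℂ) ((-1:ℂ)^(j:ℕ) * r ((i.insertNth x J : Fin (n+2) → Fin m) j) *
            g ((i.insertNth x J : Fin (n+2) → Fin m) ∘ j.succAbove))
        = ((-1:ℂ)^(i:ℕ) * r x * g J) *
          (starRingEnd ℂ) ((-1:ℂ)^(j:ℕ) * r (J j₀) * g (i₀.insertNth x (J ∘ j₀.succAbove))) := by
      intro x J
      have hIj : (i.insertNth x J : Fin (n+2) → Fin m) j = J j₀ := by
        conv_lhs => rw [← hj₀]
        simp
      rw [insertNth_comp_succAbove_ne hj₀ hi₀, hIj]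
      simp only [Fin.insertNth_apply_same, Fin.insertNth_comp_succAbove]
    simp only [step]
    have step2 : ∀ (x y : Fin m) (K : Fin n → Fin m),
        ((-1:ℂ)^(i:ℕ) * r x * g (j₀.insertNth y K)) *
          (starRingEnd ℂ) ((-1:ℂ)^(j:ℕ) * r y * g (i₀.insertNth x K))
        = -((r x * (starRingEnd ℂ) (g (Fin.cons x K))) *
            ((starRingEnd ℂ) (r y) * g (Fin.cons y K))) := by
      intro x y K
      rw [hg.insertNth, hg.insertNth]
      have hpow : ((-1:ℂ)^(i:ℕ)) * ((-1:ℂ)^(j₀:ℕ)) * (((-1:ℂ)^(j:ℕ)) * ((-1:ℂ)^(i₀:ℕ)))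
          = -1 := by
        rw [← pow_add, ← pow_add, ← pow_add]
        refine Odd.neg_one_pow (Nat.odd_iff.2 ?_)
        have := parity_odd hj₀ hi₀
        omega
      simp only [map_mul, map_pow, map_neg, map_one]
      linear_combination (r x * (starRingEnd ℂ) (g (Fin.cons x K)) *
        ((starRingEnd ℂ) (r y) * g (Fin.cons y K))) * hpow
    calc ∑ x : Fin m, ∑ J : Fin (n+1) → Fin m,
          ((-1:ℂ)^(i:ℕ) * r x * g J) *
          (starRingEnd ℂ) ((-1:ℂ)^(j:ℕ) * r (J j₀) * g (i₀.insertNth x (J ∘ j₀.succAbove)))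
        = ∑ x : Fin m, ∑ y : Fin m, ∑ K : Fin n → Fin m,
            -((r x * (starRingEnd ℂ) (g (Fin.cons x K))) *
              ((starRingEnd ℂ) (r y) * g (Fin.cons y K))) := by
          refine Finset.sum_congr rfl fun x _ => ?_
          rw [sum_insertNth j₀]
          refine Finset.sum_congr rfl fun y _ => Finset.sum_congr rfl fun K _ => ?_
          rw [Fin.insertNth_apply_same, Fin.insertNth_comp_succAbove]
          exact step2 x y K
      _ = -∑ K : Fin n → Fin m, z K * (starRingEnd ℂ) (z K) := by
          simp only [Finset.sum_neg_distrib]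
          congr 1
          calc ∑ x : Fin m, ∑ y : Fin m, ∑ K : Fin n → Fin m,
                (r x * (starRingEnd ℂ) (g (Fin.cons x K))) *
                  ((starRingEnd ℂ) (r y) * g (Fin.cons y K))
              = ∑ x : Fin m, ∑ K : Fin n → Fin m, ∑ y : Fin m,
                (r x * (starRingEnd ℂ) (g (Fin.cons x K))) *
                  ((starRingEnd ℂ) (r y) * g (Fin.cons y K)) :=
                Finset.sum_congr rfl fun x _ => Finset.sum_comm
            _ = ∑ K : Fin n → Fin m, ∑ x : Fin m, ∑ y : Fin m,
                (r x * (starRingEnd ℂ) (g (Fin.cons x K))) *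
                  ((starRingEnd ℂ) (r y) * g (Fin.cons y K)) := Finset.sum_comm
            _ = ∑ K : Fin n → Fin m, z K * (starRingEnd ℂ) (z K) := by
                refine Finset.sum_congr rfl fun K _ => ?_
                have hconj : (starRingEnd ℂ) (z K)
                    = ∑ y : Fin m, (starRingEnd ℂ) (r y) * g (Fin.cons y K) := by
                  rw [hzdef]
                  rw [map_sum]
                  simp
                rw [hconj, hzdef, Finset.sum_mul_sum]
  rw [main, Complex.neg_re, Complex.re_sum]
  rw [neg_nonpos]
  refine Finset.sum_nonneg fun K _ => ?_
  rw [Complex.mul_conj]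
  simp [Complex.normSq_nonneg]
end DIL

namespace DIL
variable {n m : ℕ}

lemma l2 (r : Fin m → ℂ) {g : (Fin (n+1) → Fin m) → ℂ} (hg : Antisym g) :
    ∑ I : Fin (n+2) → Fin m, Complex.normSq (F r g I)
      ≤ (n+2 : ℝ) * ((∑ l, Complex.normSq (r l)) * ∑ J, Complex.normSq (g J)) := by
  classical
  have h1 : (∑ I : Fin (n+2) → Fin m, F r g I * (starRingEnd ℂ) (F r g I))
      = ∑ i : Fin (n+2), ∑ j : Fin (n+2), ∑ I : Fin (n+2) → Fin m,
          ((-1:ℂ)^(i:ℕ) * r (I i) * g (I ∘ i.succAbove)) *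
            (starRingEnd ℂ) ((-1:ℂ)^(j:ℕ) * r (I j) * g (I ∘ j.succAbove)) := by
    have e : ∀ I : Fin (n+2) → Fin m, F r g I * (starRingEnd ℂ) (F r g I)
        = ∑ i : Fin (n+2), ∑ j : Fin (n+2),
            ((-1:ℂ)^(i:ℕ) * r (I i) * g (I ∘ i.succAbove)) *
              (starRingEnd ℂ) ((-1:ℂ)^(j:ℕ) * r (I j) * g (I ∘ j.succAbove)) := by
      intro I
      rw [F, map_sum, Finset.sum_mul_sum]
    rw [Finset.sum_congr rfl fun I _ => e I, Finset.sum_comm]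
    exact Finset.sum_congr rfl fun i _ => Finset.sum_comm
  have h2 : ∑ I : Fin (n+2) → Fin m, Complex.normSq (F r g I)
      = ∑ i : Fin (n+2), ∑ j : Fin (n+2), (∑ I : Fin (n+2) → Fin m,
          ((-1:ℂ)^(i:ℕ) * r (I i) * g (I ∘ i.succAbove)) *
            (starRingEnd ℂ) ((-1:ℂ)^(j:ℕ) * r (I j) * g (I ∘ j.succAbove))).re := by
    have : ∑ I : Fin (n+2) → Fin m, Complex.normSq (F r g I)
        = (∑ I : Fin (n+2) → Fin m, F r g I * (starRingEnd ℂ) (F r g I)).re := by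
      rw [Complex.re_sum]
      refine Finset.sum_congr rfl fun I _ => ?_
      rw [Complex.mul_conj]
      simp
    rw [this, h1, Complex.re_sum]
    exact Finset.sum_congr rfl fun i _ => Complex.re_sum _ _
  rw [h2]
  have hdiag : ∀ i : Fin (n+2), (∑ I : Fin (n+2) → Fin m,
      ((-1:ℂ)^(i:ℕ) * r (I i) * g (I ∘ i.succAbove)) *
        (starRingEnd ℂ) ((-1:ℂ)^(i:ℕ) * r (I i) * g (I ∘ i.succAbove))).re
      = (∑ l, Complex.normSq (r l)) * ∑ J, Complex.normSq (g J) := by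
    intro i
    have e : ∀ I : Fin (n+2) → Fin m,
        ((-1:ℂ)^(i:ℕ) * r (I i) * g (I ∘ i.succAbove)) *
          (starRingEnd ℂ) ((-1:ℂ)^(i:ℕ) * r (I i) * g (I ∘ i.succAbove))
        = ((Complex.normSq ((-1:ℂ)^(i:ℕ) * r (I i) * g (I ∘ i.succAbove)) : ℝ) : ℂ) :=
      fun I => Complex.mul_conj _
    rw [Finset.sum_congr rfl fun I _ => e I, ← Complex.ofReal_sum, Complex.ofReal_re]
    rw [sum_insertNth i
      (φ := fun I => Complex.normSq ((-1:ℂ)^(i:ℕ) * r (I i) * g (I ∘ i.succAbove)))]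
    simp only [Fin.insertNth_apply_same, Fin.insertNth_comp_succAbove, map_mul, map_pow]
    simp only [Complex.normSq_neg, Complex.normSq_one, one_pow, one_mul]
    rw [Finset.sum_mul_sum]
  have hcross : ∀ i : Fin (n+2), ∑ j : Fin (n+2), (∑ I : Fin (n+2) → Fin m,
      ((-1:ℂ)^(i:ℕ) * r (I i) * g (I ∘ i.succAbove)) *
        (starRingEnd ℂ) ((-1:ℂ)^(j:ℕ) * r (I j) * g (I ∘ j.succAbove))).re
      ≤ (∑ l, Complex.normSq (r l)) * ∑ J, Complex.normSq (g J) := by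
    intro i
    rw [← Finset.sum_erase_add _ _ (Finset.mem_univ i), ← hdiag i]
    have hle : ∑ j ∈ Finset.univ.erase i, (∑ I : Fin (n+2) → Fin m,
        ((-1:ℂ)^(i:ℕ) * r (I i) * g (I ∘ i.succAbove)) *
          (starRingEnd ℂ) ((-1:ℂ)^(j:ℕ) * r (I j) * g (I ∘ j.succAbove))).re ≤ 0 :=
      Finset.sum_nonpos fun j hj =>
        cross_re_nonpos r hg (Ne.symm ((Finset.mem_erase.1 hj).1))
    linarith
  calc ∑ i : Fin (n+2), ∑ j : Fin (n+2), (∑ I : Fin (n+2) → Fin m,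
        ((-1:ℂ)^(i:ℕ) * r (I i) * g (I ∘ i.succAbove)) *
          (starRingEnd ℂ) ((-1:ℂ)^(j:ℕ) * r (I j) * g (I ∘ j.succAbove))).re
      ≤ ∑ _i : Fin (n+2), (∑ l, Complex.normSq (r l)) * ∑ J, Complex.normSq (g J) :=
        Finset.sum_le_sum fun i _ => hcross i
    _ = (n+2 : ℝ) * ((∑ l, Complex.normSq (r l)) * ∑ J, Complex.normSq (g J)) := by
        rw [Finset.sum_const, Finset.card_univ, Fintype.card_fin, nsmul_eq_mul]
        push_cast
        ring

end DIL
namespace DIL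

noncomputable def twist (w : ℂ) (c : ℂ) : ℂ :=
  if w = 0 then 0 else w * Complex.exp (c * (Real.log (Complex.abs w) : ℂ))

lemma twist_c_zero (w : ℂ) : twist w 0 = w := by
  by_cases h : w = 0 <;> simp [twist, h]

lemma twist_diff (w : ℂ) {c : ℂ → ℂ} (hc : Differentiable ℂ c) :
    Differentiable ℂ fun z => twist w (c z) := by
  by_cases h : w = 0
  · simpa [twist, h] using differentiable_const (0:ℂ)
  · simp only [twist, h, if_false]
    exact (differentiable_const w).mul ((hc.mul (differentiable_const _)).cexp)

lemma abs_twist {w : ℂ} (hw : w ≠ 0) (c : ℂ) :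
    Complex.abs (twist w c) = Complex.abs w ^ (1 + c.re) := by
  have hpos : (0:ℝ) < Complex.abs w := AbsoluteValue.pos _ hw
  rw [twist, if_neg hw, map_mul, Complex.abs_exp]
  have hre : (c * (Real.log (Complex.abs w) : ℂ)).re = c.re * Real.log (Complex.abs w) := by
    simp [Complex.mul_re]
  rw [hre, Real.rpow_def_of_pos hpos, mul_comm (Real.log (Complex.abs w)) (1 + c.re),
    add_mul, one_mul, Real.exp_add, Real.exp_log hpos]

lemma abs_twist_le_one {w : ℂ} (hw : Complex.abs w ≤ 1) {c : ℂ} (hc : 0 ≤ 1 + c.re) :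
    Complex.abs (twist w c) ≤ 1 := by
  by_cases h : w = 0
  · simp [twist, h]
  · rw [abs_twist h]
    exact Real.rpow_le_one (AbsoluteValue.nonneg _ _) hw hc

lemma twist_sign {s : ℂ} (hs : s = 1 ∨ s = -1) (w : ℂ) (c : ℂ) :
    twist (s * w) c = s * twist w c := by
  rcases hs with h | h <;> by_cases hw : w = 0 <;>
    simp [twist, h, hw, neg_eq_zero, AbsoluteValue.map_neg] <;> ring

end DIL
namespace DIL
variable {n m : ℕ}

lemma F_apply (r : Fin m → ℂ) (g : (Fin (n+1) → Fin m) → ℂ) (I : Fin (n+2) → Fin m) :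
    F r g I = ∑ i : Fin (n+2), (-1:ℂ)^(i:ℕ) * r (I i) * g (I ∘ i.succAbove) := rfl

lemma F_abs_le {r : Fin m → ℂ} {g : (Fin (n+1) → Fin m) → ℂ}
    (hr : ∀ l, Complex.abs (r l) ≤ 1) (hg : ∀ J, Complex.abs (g J) ≤ 1)
    (I : Fin (n+2) → Fin m) : Complex.abs (F r g I) ≤ (n+2 : ℝ) := by
  calc Complex.abs (F r g I)
      ≤ ∑ i : Fin (n+2), Complex.abs ((-1:ℂ)^(i:ℕ) * r (I i) * g (I ∘ i.succAbove)) :=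
        Complex.abs.sum_le _ _
    _ ≤ ∑ _i : Fin (n+2), (1:ℝ) := by
        refine Finset.sum_le_sum fun i _ => ?_
        rw [map_mul, map_mul, map_pow, AbsoluteValue.map_neg, map_one, one_pow, one_mul]
        exact mul_le_one₀ (hr _) (AbsoluteValue.nonneg _ _) (hg _)
    _ = (n+2 : ℝ) := by simp
  
lemma rpow_sq_eq {x : ℝ} (hx : 0 ≤ x) (a : ℝ) : (x ^ a)^(2:ℕ) = x ^ (2*a) := by
  rw [← Real.rpow_natCast (x ^ a) 2, ← Real.rpow_mul hx]
  norm_num [mul_comm]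

lemma normSq_twist_eq_rpow (w : ℂ) {c : ℂ} {p : ℝ} (hp : p ≠ 0) (h : 2 * (1 + c.re) = p) :
    Complex.normSq (twist w c) = Complex.abs w ^ p := by
  by_cases hw : w = 0
  · simp [twist, hw, Real.zero_rpow hp]
  · rw [Complex.normSq_eq_abs, abs_twist hw, rpow_sq_eq (AbsoluteValue.nonneg _ _), h]

lemma twist_antisym {g : (Fin (n+1) → Fin m) → ℂ} (hg : Antisym g) (c : ℂ) :
    Antisym (fun J => twist (g J) c) := by
  intro σ J
  have hs : (((Equiv.Perm.sign σ : ℤ)):ℂ) = 1 ∨ (((Equiv.Perm.sign σ : ℤ)):ℂ) = -1 := by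
    rcases Int.units_eq_one_or (Equiv.Perm.sign σ) with h | h <;> simp [h]
  simp only [hg σ J]
  exact twist_sign hs (g J) c

end DIL
namespace DIL
variable {n m : ℕ}

lemma main_norm (p : ℝ) (hp : 2 ≤ p) (r : Fin m → ℂ)
    {g : (Fin (n+1) → Fin m) → ℂ} (hg : Antisym g)
    (hr : ∑ l, Complex.abs (r l) ^ p = 1)
    (hgn : ∑ J, Complex.abs (g J) ^ p = 1) :
    ∑ I : Fin (n+2) → Fin m, Complex.abs (F r g I) ^ p ≤ (n+2 : ℝ) ^ (p - 1) := by
  have hp0 : (0:ℝ) < p := by linarith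
  have hN0 : (0:ℝ) < (n+2 : ℝ) := by positivity
  set L := ∑ I : Fin (n+2) → Fin m, Complex.abs (F r g I) ^ p with hLdef
  have hL0 : 0 ≤ L := Finset.sum_nonneg fun I _ =>
    Real.rpow_nonneg (AbsoluteValue.nonneg _ _) _
  rcases eq_or_lt_of_le hL0 with hL | hLpos
  · rw [← hL]; positivity
  have hr1 : ∀ l, Complex.abs (r l) ≤ 1 := by
    intro l
    have h1 : Complex.abs (r l) ^ p ≤ 1 := by
      rw [← hr]
      exact Finset.single_le_sum
        (fun i _ => Real.rpow_nonneg (AbsoluteValue.nonneg _ _) _) (Finset.mem_univ l)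
    by_contra hcon
    push_neg at hcon
    have h2 : 1 < Complex.abs (r l) ^ p :=
      (Real.one_lt_rpow_iff_of_pos (lt_trans one_pos hcon)).2 (Or.inl ⟨hcon, hp0⟩)
    linarith
  have hg1 : ∀ J, Complex.abs (g J) ≤ 1 := by
    intro J
    have h1 : Complex.abs (g J) ^ p ≤ 1 := by
      rw [← hgn]
      exact Finset.single_le_sum
        (fun i _ => Real.rpow_nonneg (AbsoluteValue.nonneg _ _) _) (Finset.mem_univ J)
    by_contra hcon
    push_neg at hcon
    have h2 : 1 < Complex.abs (g J) ^ p :=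
      (Real.one_lt_rpow_iff_of_pos (lt_trans one_pos hcon)).2 (Or.inl ⟨hcon, hp0⟩)
    linarith
  set θ : ℝ := 1 - 2/p with hθdef
  have h2p : 0 < 2/p := by positivity
  have h2p1 : 2/p ≤ 1 := by rw [div_le_one hp0]; linarith
  have hθ0 : 0 ≤ θ := by rw [hθdef]; linarith
  have hθ1 : θ ≤ 1 := by rw [hθdef]; linarith
  set c1 : ℂ → ℂ := fun z => (((p/2 : ℝ)) : ℂ) * (1 - z) - 1 with hc1def
  set c2 : ℂ → ℂ := fun z => (((p/2 : ℝ)) : ℂ) * (1 + z) - 1 with hc2def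
  have hc1re : ∀ z : ℂ, (c1 z).re = p/2 * (1 - z.re) - 1 := by
    intro z
    simp [hc1def, Complex.mul_re]
  have hc2re : ∀ z : ℂ, (c2 z).re = p/2 * (1 + z.re) - 1 := by
    intro z
    simp [hc2def, Complex.mul_re]
  set H : ℂ → ℂ := fun z => ∑ I : Fin (n+2) → Fin m,
      F (fun l => twist (r l) (c1 z)) (fun J => twist (g J) (c1 z)) I *
        twist ((starRingEnd ℂ) (F r g I)) (c2 z) with hHdef
  -- differentiability
  have hc1diff : Differentiable ℂ c1 := by rw [hc1def]; fun_prop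
  have hc2diff : Differentiable ℂ c2 := by rw [hc2def]; fun_prop
  have hdiff : Differentiable ℂ H := by
    rw [hHdef]
    apply Differentiable.fun_sum
    intro I _
    apply Differentiable.mul _ (twist_diff _ hc2diff)
    simp only [F_apply]
    apply Differentiable.fun_sum
    intro i _
    exact ((differentiable_const _).mul (twist_diff _ hc1diff)).mul (twist_diff _ hc1diff)
  -- value at θ
  have hpC : (p:ℂ) ≠ 0 := by exact_mod_cast hp0.ne'
  have hHθ : H ((θ : ℝ) : ℂ) = ((L : ℝ) : ℂ) := by
    have hc1θ : c1 ((θ:ℝ):ℂ) = 0 := by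
      simp only [hc1def, hθdef]
      push_cast
      field_simp
      ring
    have hc2θ : c2 ((θ:ℝ):ℂ) = ((p - 2 : ℝ):ℂ) := by
      simp only [hc2def, hθdef]
      push_cast
      field_simp
      ring
    simp only [hHdef, hc1θ, hc2θ, twist_c_zero]
    rw [hLdef, Complex.ofReal_sum]
    refine Finset.sum_congr rfl fun I _ => ?_
    by_cases h : F r g I = 0
    · rw [show F (fun l => r l) (fun J => g J) = F r g from rfl, h]
      simp [Real.zero_rpow hp0.ne']
    · have hFpos : 0 < Complex.abs (F r g I) := AbsoluteValue.pos _ h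
      rw [show F (fun l => r l) (fun J => g J) = F r g from rfl]
      rw [twist, if_neg (by simpa using h)]
      rw [Complex.abs_conj]
      have harg : (((p - 2:ℝ)):ℂ) * ((Real.log (Complex.abs (F r g I)) : ℝ) : ℂ)
          = (((Real.log (Complex.abs (F r g I)) * (p-2) : ℝ)) : ℂ) := by push_cast; ring
      rw [harg, ← Complex.ofReal_exp, ← Real.rpow_def_of_pos hFpos]
      rw [← mul_assoc, Complex.mul_conj, Complex.normSq_eq_abs, ← Complex.ofReal_mul]
      congr 1
      rw [← Real.rpow_natCast (Complex.abs (F r g I)) 2, ← Real.rpow_add hFpos]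
      norm_num
  -- generic triangle inequality for H
  have habs : ∀ z : ℂ, ‖H z‖ ≤ ∑ I : Fin (n+2) → Fin m,
      Complex.abs (F (fun l => twist (r l) (c1 z)) (fun J => twist (g J) (c1 z)) I) *
        Complex.abs (twist ((starRingEnd ℂ) (F r g I)) (c2 z)) := by
    intro z
    simp only [hHdef, Complex.norm_eq_abs]
    refine le_trans (Complex.abs.sum_le _ _) (le_of_eq ?_)
    exact Finset.sum_congr rfl fun I _ => map_mul _ _ _
  -- boundary bounds
  have ha : ∀ z ∈ Complex.re ⁻¹' {0}, ‖H z‖ ≤ Real.sqrt (n+2:ℝ) * Real.sqrt L := by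
    intro z hz0
    have hz0' : z.re = 0 := hz0
    have hg' : Antisym (fun J => twist (g J) (c1 z)) := twist_antisym hg _
    have hs1 : ∑ l, Complex.normSq (twist (r l) (c1 z)) = 1 := by
      rw [← hr]
      exact Finset.sum_congr rfl fun l _ =>
        normSq_twist_eq_rpow _ hp0.ne' (by rw [hc1re, hz0']; ring)
    have hs2 : ∑ J, Complex.normSq (twist (g J) (c1 z)) = 1 := by
      rw [← hgn]
      exact Finset.sum_congr rfl fun J _ =>
        normSq_twist_eq_rpow _ hp0.ne' (by rw [hc1re, hz0']; ring)
    have hF2 : ∑ I : Fin (n+2) → Fin m,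
        Complex.abs (F (fun l => twist (r l) (c1 z)) (fun J => twist (g J) (c1 z)) I) ^ (2:ℕ)
        ≤ (n+2:ℝ) := by
      have h := l2 (fun l => twist (r l) (c1 z)) hg'
      rw [hs1, hs2] at h
      simpa [Complex.sq_abs] using h
    have hφ2 : ∑ I : Fin (n+2) → Fin m,
        Complex.abs (twist ((starRingEnd ℂ) (F r g I)) (c2 z)) ^ (2:ℕ) = L := by
      rw [hLdef]
      refine Finset.sum_congr rfl fun I _ => ?_
      have e : Complex.normSq (twist ((starRingEnd ℂ) (F r g I)) (c2 z))
          = Complex.abs ((starRingEnd ℂ) (F r g I)) ^ p :=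
        normSq_twist_eq_rpow _ hp0.ne' (by rw [hc2re, hz0']; ring)
      rw [Complex.sq_abs, e, Complex.abs_conj]
    calc ‖H z‖ ≤ ∑ I : Fin (n+2) → Fin m,
          Complex.abs (F (fun l => twist (r l) (c1 z)) (fun J => twist (g J) (c1 z)) I) *
            Complex.abs (twist ((starRingEnd ℂ) (F r g I)) (c2 z)) := habs z
      _ ≤ Real.sqrt (∑ I : Fin (n+2) → Fin m,
            Complex.abs (F (fun l => twist (r l) (c1 z)) (fun J => twist (g J) (c1 z)) I)
              ^ (2:ℕ)) *
          Real.sqrt (∑ I : Fin (n+2) → Fin m,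
            Complex.abs (twist ((starRingEnd ℂ) (F r g I)) (c2 z)) ^ (2:ℕ)) :=
          Real.sum_mul_le_sqrt_mul_sqrt _ _ _
      _ ≤ Real.sqrt (n+2:ℝ) * Real.sqrt L := by
          rw [hφ2]
          exact mul_le_mul_of_nonneg_right (Real.sqrt_le_sqrt hF2) (Real.sqrt_nonneg _)
  have hb : ∀ z ∈ Complex.re ⁻¹' {1}, ‖H z‖ ≤ (n+2:ℝ) * L := by
    intro z hz1
    have hz1' : z.re = 1 := hz1
    have hrb : ∀ l, Complex.abs (twist (r l) (c1 z)) ≤ 1 := fun l =>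
      abs_twist_le_one (hr1 l) (by rw [hc1re, hz1']; norm_num)
    have hgb : ∀ J, Complex.abs (twist (g J) (c1 z)) ≤ 1 := fun J =>
      abs_twist_le_one (hg1 J) (by rw [hc1re, hz1']; norm_num)
    have hφb : ∀ I : Fin (n+2) → Fin m,
        Complex.abs (twist ((starRingEnd ℂ) (F r g I)) (c2 z))
          = Complex.abs (F r g I) ^ p := by
      intro I
      by_cases h : F r g I = 0
      · simp [twist, h, Real.zero_rpow hp0.ne']
      · rw [abs_twist (by simpa using h), Complex.abs_conj]
        congr 1
        rw [hc2re, hz1']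
        ring
    calc ‖H z‖ ≤ ∑ I : Fin (n+2) → Fin m,
          Complex.abs (F (fun l => twist (r l) (c1 z)) (fun J => twist (g J) (c1 z)) I) *
            Complex.abs (twist ((starRingEnd ℂ) (F r g I)) (c2 z)) := habs z
      _ ≤ ∑ I : Fin (n+2) → Fin m, (n+2:ℝ) * (Complex.abs (F r g I) ^ p) := by
          refine Finset.sum_le_sum fun I _ => ?_
          rw [hφb I]
          exact mul_le_mul_of_nonneg_right (F_abs_le hrb hgb I)
            (Real.rpow_nonneg (AbsoluteValue.nonneg _ _) p)
      _ = (n+2:ℝ) * L := by rw [← Finset.mul_sum, hLdef]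
  have hB : BddAbove ((norm ∘ H) '' (Complex.HadamardThreeLines.verticalClosedStrip 0 1)) := by
    refine ⟨(n+2:ℝ) * ∑ I : Fin (n+2) → Fin m, (max 1 (Complex.abs (F r g I))) ^ p, ?_⟩
    rintro x ⟨z, hz, rfl⟩
    have hz' : z.re ∈ Set.Icc (0:ℝ) 1 := hz
    have hz1 := hz'.1
    have hz2 := hz'.2
    have hrb : ∀ l, Complex.abs (twist (r l) (c1 z)) ≤ 1 := fun l =>
      abs_twist_le_one (hr1 l) (by rw [hc1re]; nlinarith)
    have hgb : ∀ J, Complex.abs (twist (g J) (c1 z)) ≤ 1 := fun J =>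
      abs_twist_le_one (hg1 J) (by rw [hc1re]; nlinarith)
    have hφb : ∀ I : Fin (n+2) → Fin m,
        Complex.abs (twist ((starRingEnd ℂ) (F r g I)) (c2 z))
          ≤ (max 1 (Complex.abs (F r g I))) ^ p := by
      intro I
      by_cases h : F r g I = 0
      · have : (0:ℝ) ≤ (max 1 (Complex.abs (F r g I))) ^ p := by positivity
        simpa [twist, h] using this
      · rw [abs_twist (by simpa using h), Complex.abs_conj]
        have he0 : 0 ≤ 1 + (c2 z).re := by rw [hc2re]; nlinarith
        have hep : 1 + (c2 z).re ≤ p := by rw [hc2re]; nlinarith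
        calc Complex.abs (F r g I) ^ (1 + (c2 z).re)
            ≤ (max 1 (Complex.abs (F r g I))) ^ (1 + (c2 z).re) :=
              Real.rpow_le_rpow (AbsoluteValue.nonneg _ _) (le_max_right _ _) he0
          _ ≤ (max 1 (Complex.abs (F r g I))) ^ p :=
              Real.rpow_le_rpow_of_exponent_le (le_max_left _ _) hep
    calc (norm ∘ H) z ≤ ∑ I : Fin (n+2) → Fin m,
          Complex.abs (F (fun l => twist (r l) (c1 z)) (fun J => twist (g J) (c1 z)) I) *
            Complex.abs (twist ((starRingEnd ℂ) (F r g I)) (c2 z)) := habs z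
      _ ≤ ∑ I : Fin (n+2) → Fin m, (n+2:ℝ) * (max 1 (Complex.abs (F r g I))) ^ p := by
          refine Finset.sum_le_sum fun I _ => ?_
          exact mul_le_mul (F_abs_le hrb hgb I) (hφb I) (AbsoluteValue.nonneg _ _)
            hN0.le
      _ = (n+2:ℝ) * ∑ I : Fin (n+2) → Fin m, (max 1 (Complex.abs (F r g I))) ^ p := by
          rw [← Finset.mul_sum]
  have hz : ((θ : ℝ) : ℂ) ∈ Complex.HadamardThreeLines.verticalClosedStrip 0 1 := by
    simp only [Complex.HadamardThreeLines.verticalClosedStrip, Set.mem_preimage,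
      Complex.ofReal_re, Set.mem_Icc]
    exact ⟨hθ0, hθ1⟩
  have h3 := Complex.HadamardThreeLines.norm_le_interp_of_mem_verticalClosedStrip' (f := H) zero_lt_one hz
    hdiff.diffContOnCl hB ha hb
  rw [hHθ] at h3
  have hnorm : ‖((L:ℝ):ℂ)‖ = L := by
    rw [Complex.norm_real, Real.norm_of_nonneg hL0]
  rw [hnorm, Complex.ofReal_re] at h3
  -- conclude
  have hNL : (0:ℝ) < (n+2:ℝ) * L := mul_pos hN0 hLpos
  have e1 : Real.sqrt ((n+2:ℝ)) * Real.sqrt L = ((n+2:ℝ) * L) ^ (1/2 : ℝ) := by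
    rw [← Real.sqrt_mul hN0.le, Real.sqrt_eq_rpow]
  rw [e1] at h3
  have e2 : (((n+2:ℝ) * L) ^ (1/2 : ℝ)) ^ (1 - θ) * ((n+2:ℝ) * L) ^ θ
      = ((n+2:ℝ) * L) ^ (1 - 1/p) := by
    rw [← Real.rpow_mul hNL.le, ← Real.rpow_add hNL]
    congr 1
    rw [hθdef]
    field_simp
    ring
  simp only [sub_zero, div_one] at h3
  rw [e2, Real.mul_rpow hN0.le hL0] at h3
  have hLp : L ^ (1/p : ℝ) ≤ (n+2:ℝ) ^ (1 - 1/p : ℝ) := by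
    have hLpow_pos : (0:ℝ) < L ^ (1 - 1/p : ℝ) := Real.rpow_pos_of_pos hLpos _
    have hmul : L ^ (1/p : ℝ) * L ^ (1 - 1/p : ℝ)
        ≤ (n+2:ℝ) ^ (1 - 1/p : ℝ) * L ^ (1 - 1/p : ℝ) := by
      rw [← Real.rpow_add hLpos]
      have he : 1/p + (1 - 1/p) = 1 := by ring
      rw [he, Real.rpow_one]
      exact h3
    exact le_of_mul_le_mul_right hmul hLpow_pos
  have e3 : L = (L ^ (1/p : ℝ)) ^ (p : ℝ) := by
    rw [← Real.rpow_mul hL0]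
    rw [show (1/p) * p = 1 by field_simp]
    rw [Real.rpow_one]
  calc L = (L ^ (1/p : ℝ)) ^ (p : ℝ) := e3
    _ ≤ ((n+2:ℝ) ^ (1 - 1/p : ℝ)) ^ (p : ℝ) :=
        Real.rpow_le_rpow (Real.rpow_nonneg hL0 _) hLp hp0.le
    _ = (n+2:ℝ) ^ (p - 1) := by
        rw [← Real.rpow_mul hN0.le]
        congr 1
        field_simp
end DIL

namespace DIL
variable {n m : ℕ}

lemma F_const_mul (c d : ℂ) (r : Fin m → ℂ) (g : (Fin (n+1) → Fin m) → ℂ)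
    (I : Fin (n+2) → Fin m) :
    F (fun l => c * r l) (fun J => d * g J) I = c * d * F r g I := by
  simp only [F_apply, Finset.mul_sum]
  exact Finset.sum_congr rfl fun i _ => by ring

set_option maxHeartbeats 1000000 in
lemma main (p : ℝ) (hp : 2 ≤ p) (r : Fin m → ℂ)
    {g : (Fin (n+1) → Fin m) → ℂ} (hg : Antisym g) :
    ∑ I : Fin (n+2) → Fin m, Complex.abs (F r g I) ^ p
      ≤ (n+2:ℝ) ^ (p-1) * (∑ l, Complex.abs (r l) ^ p) * (∑ J, Complex.abs (g J) ^ p) := by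
  have hp0 : (0:ℝ) < p := by linarith
  set A := ∑ l, Complex.abs (r l) ^ p with hA
  set B := ∑ J, Complex.abs (g J) ^ p with hB
  have hA0 : 0 ≤ A := Finset.sum_nonneg fun l _ =>
    Real.rpow_nonneg (AbsoluteValue.nonneg _ _) _
  have hB0 : 0 ≤ B := Finset.sum_nonneg fun J _ =>
    Real.rpow_nonneg (AbsoluteValue.nonneg _ _) _
  by_cases hAz : A = 0
  · have hrz : ∀ l, r l = 0 := by
      intro l
      have h0 : ∀ i ∈ Finset.univ, (0:ℝ) ≤ Complex.abs (r i) ^ p := fun i _ =>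
        Real.rpow_nonneg (AbsoluteValue.nonneg _ _) _
      have h := (Finset.sum_eq_zero_iff_of_nonneg h0).1 (hA ▸ hAz) l (Finset.mem_univ l)
      have h2 : Complex.abs (r l) = 0 := by
        by_contra hc
        have hpos : 0 < Complex.abs (r l) := lt_of_le_of_ne (AbsoluteValue.nonneg _ _) (Ne.symm hc)
        have := Real.rpow_pos_of_pos hpos p
        linarith
      exact (map_eq_zero _).1 h2
    have hFz : ∀ I : Fin (n+2) → Fin m, F r g I = 0 := by
      intro I
      simp [F_apply, hrz]
    have hL : ∑ I : Fin (n+2) → Fin m, Complex.abs (F r g I) ^ p = 0 := by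
      refine Finset.sum_eq_zero fun I _ => ?_
      rw [hFz I]
      simp [Real.zero_rpow hp0.ne']
    rw [hL]
    have : (0:ℝ) ≤ (n+2:ℝ) ^ (p-1) * A * B := by positivity
    linarith
  by_cases hBz : B = 0
  · have hgz : ∀ J, g J = 0 := by
      intro J
      have h0 : ∀ i ∈ Finset.univ, (0:ℝ) ≤ Complex.abs (g i) ^ p := fun i _ =>
        Real.rpow_nonneg (AbsoluteValue.nonneg _ _) _
      have h := (Finset.sum_eq_zero_iff_of_nonneg h0).1 (hB ▸ hBz) J (Finset.mem_univ J)
      have h2 : Complex.abs (g J) = 0 := by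
        by_contra hc
        have hpos : 0 < Complex.abs (g J) := lt_of_le_of_ne (AbsoluteValue.nonneg _ _) (Ne.symm hc)
        have := Real.rpow_pos_of_pos hpos p
        linarith
      exact (map_eq_zero _).1 h2
    have hFz : ∀ I : Fin (n+2) → Fin m, F r g I = 0 := by
      intro I
      simp [F_apply, hgz]
    have hL : ∑ I : Fin (n+2) → Fin m, Complex.abs (F r g I) ^ p = 0 := by
      refine Finset.sum_eq_zero fun I _ => ?_
      rw [hFz I]
      simp [Real.zero_rpow hp0.ne']
    rw [hL]
    have : (0:ℝ) ≤ (n+2:ℝ) ^ (p-1) * A * B := by positivity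
    linarith
  have hApos : 0 < A := lt_of_le_of_ne hA0 (Ne.symm hAz)
  have hBpos : 0 < B := lt_of_le_of_ne hB0 (Ne.symm hBz)
  set a : ℝ := A ^ (1/p : ℝ) with hadef
  set b : ℝ := B ^ (1/p : ℝ) with hbdef
  have hapos : 0 < a := Real.rpow_pos_of_pos hApos _
  have hbpos : 0 < b := Real.rpow_pos_of_pos hBpos _
  have hap : a ^ p = A := by
    rw [hadef, ← Real.rpow_mul hA0]
    rw [show (1/p) * p = 1 by field_simp]
    exact Real.rpow_one A
  have hbp : b ^ p = B := by
    rw [hbdef, ← Real.rpow_mul hB0]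
    rw [show (1/p) * p = 1 by field_simp]
    exact Real.rpow_one B
  set r' : Fin m → ℂ := fun l => ((a⁻¹ : ℝ) : ℂ) * r l with hr'def
  set g' : (Fin (n+1) → Fin m) → ℂ := fun J => ((b⁻¹ : ℝ) : ℂ) * g J with hg'def
  have habs_r' : ∀ l, Complex.abs (r' l) = a⁻¹ * Complex.abs (r l) := by
    intro l
    rw [hr'def]
    simp only [map_mul, Complex.abs_ofReal]
    rw [abs_of_pos (inv_pos.2 hapos)]
  have habs_g' : ∀ J, Complex.abs (g' J) = b⁻¹ * Complex.abs (g J) := by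
    intro J
    rw [hg'def]
    simp only [map_mul, Complex.abs_ofReal]
    rw [abs_of_pos (inv_pos.2 hbpos)]
  have hr'1 : ∑ l, Complex.abs (r' l) ^ p = 1 := by
    have : ∀ l, Complex.abs (r' l) ^ p = A⁻¹ * Complex.abs (r l) ^ p := by
      intro l
      rw [habs_r', Real.mul_rpow (inv_nonneg.2 hapos.le) (AbsoluteValue.nonneg _ _),
        Real.inv_rpow hapos.le, hap]
    rw [Finset.sum_congr rfl fun l _ => this l, ← Finset.mul_sum, ← hA,
      inv_mul_cancel₀ hApos.ne']
  have hg'1 : ∑ J, Complex.abs (g' J) ^ p = 1 := by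
    have : ∀ J, Complex.abs (g' J) ^ p = B⁻¹ * Complex.abs (g J) ^ p := by
      intro J
      rw [habs_g', Real.mul_rpow (inv_nonneg.2 hbpos.le) (AbsoluteValue.nonneg _ _),
        Real.inv_rpow hbpos.le, hbp]
    rw [Finset.sum_congr rfl fun J _ => this J, ← Finset.mul_sum, ← hB,
      inv_mul_cancel₀ hBpos.ne']
  have hg'anti : Antisym g' := by
    intro σ J
    rw [hg'def]
    simp only
    rw [hg σ J]
    ring
  have hmn := main_norm p hp r' hg'anti hr'1 hg'1
  have hFr' : ∀ I : Fin (n+2) → Fin m,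
      Complex.abs (F r' g' I) ^ p = A⁻¹ * B⁻¹ * Complex.abs (F r g I) ^ p := by
    intro I
    rw [hr'def, hg'def, F_const_mul]
    simp only [map_mul, Complex.abs_ofReal]
    rw [abs_of_pos (inv_pos.2 hapos), abs_of_pos (inv_pos.2 hbpos)]
    rw [Real.mul_rpow (mul_nonneg (inv_nonneg.2 hapos.le) (inv_nonneg.2 hbpos.le))
        (AbsoluteValue.nonneg _ _),
      Real.mul_rpow (inv_nonneg.2 hapos.le) (inv_nonneg.2 hbpos.le),
      Real.inv_rpow hapos.le, Real.inv_rpow hbpos.le, hap, hbp]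
  rw [Finset.sum_congr rfl fun I _ => hFr' I, ← Finset.mul_sum] at hmn
  have hstep : ∑ I : Fin (n+2) → Fin m, Complex.abs (F r g I) ^ p
      ≤ (n+2:ℝ) ^ (p-1) * (A * B) := by
    have h2 : A * B * (A⁻¹ * B⁻¹ * ∑ I : Fin (n+2) → Fin m, Complex.abs (F r g I) ^ p)
        = ∑ I : Fin (n+2) → Fin m, Complex.abs (F r g I) ^ p := by
      field_simp
    calc ∑ I : Fin (n+2) → Fin m, Complex.abs (F r g I) ^ p
        = A * B * (A⁻¹ * B⁻¹ * ∑ I : Fin (n+2) → Fin m, Complex.abs (F r g I) ^ p) :=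
          h2.symm
      _ ≤ A * B * ((n+2:ℝ) ^ (p-1)) := by
          refine mul_le_mul_of_nonneg_left hmn (by positivity)
      _ = (n+2:ℝ) ^ (p-1) * (A * B) := by ring
  calc ∑ I : Fin (n+2) → Fin m, Complex.abs (F r g I) ^ p
      ≤ (n+2:ℝ) ^ (p-1) * (A * B) := hstep
    _ = (n+2:ℝ) ^ (p-1) * A * B := by ring

end DIL


theorem determinant_interpolation_lemma_p_ge_two
    (k m : ℕ) (hk : 0 < k) (hm : 0 < m)
    (p : ℝ) (hp : 2 ≤ p)
    (S : Matrix (Fin k) (Fin m) ℂ) (r : Fin m → ℂ)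
    (T : Matrix (Fin (k + 1)) (Fin m) ℂ)
    (hT0 : ∀ j, T 0 j = r j)
    (hTS : ∀ (i : Fin k) (j : Fin m), T i.succ j = S i j) :
    ∑ I : Fin (k + 1) → Fin m, ‖(T.submatrix id I).det‖ ^ p ≤
      ((k : ℝ) + 1) ^ (p - 1) * (∑ l, ‖r l‖ ^ p) *
        ∑ J : Fin k → Fin m, ‖(S.submatrix id J).det‖ ^ p := by
  show ∑ I : Fin (k + 1) → Fin m, Complex.abs (T.submatrix id I).det ^ p ≤
      ((k : ℝ) + 1) ^ (p - 1) * (∑ l, Complex.abs (r l) ^ p) *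
        ∑ J : Fin k → Fin m, Complex.abs (S.submatrix id J).det ^ p
  obtain ⟨n, rfl⟩ : ∃ n, k = n + 1 := ⟨k - 1, (Nat.succ_pred_eq_of_pos hk).symm⟩
  set g : (Fin (n+1) → Fin m) → ℂ := fun J => (S.submatrix id J).det with hgdef
  have hg : DIL.Antisym g := by
    intro σ J
    have h := Matrix.det_permute' σ (S.submatrix id J)
    rw [Matrix.submatrix_submatrix] at h
    simpa [hgdef] using h
  have hF : ∀ I : Fin (n+2) → Fin m, (T.submatrix id I).det = DIL.F r g I := by
    intro I
    rw [Matrix.det_succ_row_zero, DIL.F]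
    refine Finset.sum_congr rfl fun i _ => ?_
    have e1 : (T.submatrix id I) 0 i = r (I i) := by
      rw [Matrix.submatrix_apply]
      exact hT0 _
    have e2 : (T.submatrix id I).submatrix Fin.succ i.succAbove
        = S.submatrix id (I ∘ i.succAbove) := by
      ext a b
      simp [Matrix.submatrix_apply, hTS]
    rw [e1, e2]
  have h := DIL.main p hp r hg
  have hcast : ((n:ℝ)+2) = ((n+1:ℕ):ℝ) + 1 := by push_cast; ring
  calc ∑ I : Fin (n+2) → Fin m, Complex.abs (T.submatrix id I).det ^ p
      = ∑ I : Fin (n+2) → Fin m, Complex.abs (DIL.F r g I) ^ p := by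
        exact Finset.sum_congr rfl fun I _ => by rw [hF I]
    _ ≤ ((n:ℝ)+2) ^ (p-1) * (∑ l, Complex.abs (r l) ^ p) *
          (∑ J : Fin (n+1) → Fin m, Complex.abs (g J) ^ p) := h
    _ = (((n+1:ℕ):ℝ) + 1) ^ (p - 1) * (∑ l, Complex.abs (r l) ^ p) *
          ∑ J : Fin (n+1) → Fin m, Complex.abs ((S.submatrix id J)).det ^ p := by
        rw [hcast, hgdef]
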